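/- The linear multi-agent system ẋ = (I_L ⊗ A − δ L ⊗ BK)x achieves group consensus for all initial states (i.e., x_l(t) − x_k(t) → 0 for all l,k in the same cluster) if and only if the matrix I_{L−N} ⊗ A − δ L̂ ⊗ BK is Hurwitz, where L̂ is the reduced matrix obtained from L via the cluster error transformation. -/

import Mathlib

open Matrix Kronecker Filter NormedSpace

attribute [local instance] Matrix.linftyOpNormedRing Matrix.linftyOpNormedAlgebra

set_option maxHeartbeats 1000000
set_option linter.unusedSectionVars false

namespace Stmt7Aux

variable {W : Type*} [Fintype W] [DecidableEq W]

/-- `mulVec` at a fixed vector, as an `ℝ`-linear CLM in the matrix argument. -/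
noncomputable def mvCLM (v : W → ℂ) : Matrix W W ℂ →L[ℝ] (W → ℂ) :=
  LinearMap.toContinuousLinearMap
  { toFun := fun X => X.mulVec v
    map_add' := fun X Y => Matrix.add_mulVec X Y v
    map_smul' := fun r X => by
      ext w
      simp [Matrix.mulVec, dotProduct, Finset.smul_sum, Matrix.smul_apply, mul_assoc] }

@[simp] lemma mvCLM_apply (v : W → ℂ) (X : Matrix W W ℂ) : mvCLM v X = X.mulVec v := rfl

/-- matrix as an `ℝ`-CLM on vectors, as a CLM in the matrix. -/
noncomputable def matCLM : Matrix W W ℂ →L[ℝ] ((W → ℂ) →L[ℝ] (W → ℂ)) :=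
  LinearMap.toContinuousLinearMap
  { toFun := fun X => LinearMap.toContinuousLinearMap (X.mulVecLin.restrictScalars ℝ)
    map_add' := fun X Y => by ext v w; simp [Matrix.add_mulVec]
    map_smul' := fun r X => by
      ext v w
      simp [Matrix.mulVec, dotProduct, Finset.smul_sum, Matrix.smul_apply, mul_assoc] }

@[simp] lemma matCLM_apply (X : Matrix W W ℂ) (v : W → ℂ) : matCLM X v = X.mulVec v := rfl

/-- Existence: the matrix exponential gives solutions of `y' = M y`. -/
lemma hasDerivAt_expSol (M : Matrix W W ℂ) (v₀ : W → ℂ) (t : ℝ) :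
    HasDerivAt (fun s : ℝ => (exp (s • M)).mulVec v₀)
      (M.mulVec ((exp (t • M)).mulVec v₀)) t := by
  have h : HasDerivAt (fun s : ℝ => exp (s • M)) (M * exp (t • M)) t :=
    hasDerivAt_exp_smul_const' M t
  have h2 := ((mvCLM v₀).hasFDerivAt.comp_hasDerivAt t h :)
  exact h2.congr_deriv (Matrix.mulVec_mulVec _ _ _).symm

/-- Uniqueness: every global solution of `y' = M y` is given by the matrix exponential. -/
lemma sol_eq_expSol (M : Matrix W W ℂ) (y : ℝ → W → ℂ)
    (hy : ∀ t, HasDerivAt y (M.mulVec (y t)) t) (t : ℝ) :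
    y t = (exp (t • M)).mulVec (y 0) := by
  have hg : ∀ s : ℝ, HasDerivAt (fun u : ℝ => (exp ((-u) • M)).mulVec (y u)) 0 s := by
    intro s
    have h1 : HasDerivAt (fun u : ℝ => exp (u • M)) (M * exp ((-s) • M)) (-s) :=
      hasDerivAt_exp_smul_const' M (-s)
    have h2 : HasDerivAt (fun u : ℝ => exp ((-u) • M)) (-(M * exp ((-s) • M))) s := by
      have := h1.scomp s (hasDerivAt_neg s)
      simp only [Function.comp_def, neg_one_smul] at this
      exact this
    have h3 := (matCLM.hasFDerivAt.comp_hasDerivAt s h2 :)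
    have h4 := h3.clm_apply (hy s)
    have hcomm : exp ((-s) • M) * M = M * exp ((-s) • M) :=
      ((((Commute.refl M).smul_left (-s)).exp_left).symm.eq).symm
    refine h4.congr_deriv (Eq.symm ?_)
    show (0 : W → ℂ) = (matCLM (-(M * exp ((-s) • M)))) (y s)
      + (matCLM (exp ((-s) • M))) (M.mulVec (y s))
    simp only [map_neg, matCLM_apply, ContinuousLinearMap.neg_apply, Matrix.mulVec_mulVec, hcomm]
    simp
  have hconst := fun s : ℝ => is_const_of_deriv_eq_zero
    (fun u => (hg u).differentiableAt) (fun u => (hg u).deriv) s 0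
  have h0 : (exp ((-(0:ℝ)) • M)).mulVec (y 0) = y 0 := by
    rw [neg_zero, zero_smul, exp_zero, Matrix.one_mulVec]
  have hinv : exp (t • M) * exp ((-t) • M) = 1 := by
    rw [← Matrix.exp_add_of_commute _ _ (((Commute.refl M).smul_left t).smul_right (-t))]
    rw [← add_smul]
    norm_num [exp_zero]
  have hc := hconst t
  simp only [h0] at hc
  calc y t = (exp (t • M) * exp ((-t) • M)).mulVec (y t) := by
        rw [hinv, Matrix.one_mulVec]
    _ = (exp (t • M)).mulVec ((exp ((-t) • M)).mulVec (y t)) := by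
        rw [Matrix.mulVec_mulVec]
    _ = (exp (t • M)).mulVec (y 0) := by rw [hc]

/-- Scalar decay: `e^{tμ} t^n c → 0` when `Re μ < 0`. -/
lemma scalar_decay {μ : ℂ} (hμ : μ.re < 0) (n : ℕ) (c : ℂ) :
    Tendsto (fun t : ℝ => Complex.exp ((t : ℂ) * μ) * (t : ℂ) ^ n * c) atTop (nhds 0) := by
  set b : ℝ := -μ.re with hb
  have hb0 : 0 < b := by simpa [hb] using hμ
  have h1 : Tendsto (fun t : ℝ => b * t) atTop atTop :=
    Tendsto.const_mul_atTop hb0 tendsto_id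
  have h2 : Tendsto (fun t : ℝ => (b * t) ^ n * Real.exp (-(b * t))) atTop (nhds 0) :=
    (Real.tendsto_pow_mul_exp_neg_atTop_nhds_zero n).comp h1
  have h3 : Tendsto (fun t : ℝ => ((b * t) ^ n * Real.exp (-(b * t))) * ((b ^ n)⁻¹ * ‖c‖))
      atTop (nhds 0) := by
    simpa using h2.mul_const ((b ^ n)⁻¹ * ‖c‖)
  rw [tendsto_zero_iff_norm_tendsto_zero]
  apply squeeze_zero_norm' _ h3
  filter_upwards [eventually_ge_atTop (0 : ℝ)] with t ht
  have hnorm : ‖Complex.exp ((t : ℂ) * μ) * (t : ℂ) ^ n * c‖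
      = Real.exp (t * μ.re) * t ^ n * ‖c‖ := by
    rw [norm_mul, norm_mul, Complex.norm_exp]
    simp [abs_of_nonneg ht]
  rw [Real.norm_eq_abs, abs_of_nonneg (by positivity), hnorm]
  have : Real.exp (t * μ.re) * t ^ n * ‖c‖
      = ((b * t) ^ n * Real.exp (-(b * t))) * ((b ^ n)⁻¹ * ‖c‖) := by
    rw [mul_pow]
    have : Real.exp (t * μ.re) = Real.exp (-(b * t)) := by rw [hb]; ring_nf
    rw [this]
    field_simp
  rw [this]

/-- Hurwitz implies decay of the matrix exponential applied to any vector. -/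
lemma expSol_tendsto_zero (M : Matrix W W ℂ) (hM : ∀ μ ∈ spectrum ℂ M, μ.re < 0)
    (v : W → ℂ) :
    Tendsto (fun t : ℝ => (exp (t • M)).mulVec v) atTop (nhds 0) := by
  classical
  set f : Module.End ℂ (W → ℂ) := Matrix.toLinAlgEquiv' M with hf
  have hspec : spectrum ℂ f = spectrum ℂ M := AlgEquiv.spectrum_eq _ _
  have htop : ⨆ μ : ℂ, f.maxGenEigenspace μ = ⊤ := Module.End.iSup_maxGenEigenspace_eq_top f
  have hmem : v ∈ ⨆ μ : ℂ, (f.maxGenEigenspace μ).toAddSubmonoid := by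
    rw [← Submodule.iSup_toAddSubmonoid, htop]
    trivial
  induction hmem using AddSubmonoid.iSup_induction' with
  | mem μ u hu =>
    rcases eq_or_ne u 0 with rfl | hu0
    · simpa [Matrix.mulVec_zero] using (tendsto_const_nhds :
        Tendsto (fun _ : ℝ => (0 : W → ℂ)) atTop (nhds 0))
    · -- μ is an eigenvalue, hence in the spectrum
      have hre : μ.re < 0 := by
        apply hM
        rw [← hspec]
        refine Module.End.hasEigenvalue_iff_mem_spectrum.mp ?_
        have hne : f.maxGenEigenspace μ ≠ ⊥ := by
          intro h
          exact hu0 (by simpa [h] using hu)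
        exact (Module.End.hasUnifEigenvalue_iff_hasUnifEigenvalue_one
          (by norm_num : (0 : ℕ∞) < ⊤)).mp hne
      obtain ⟨k, hk⟩ := (Module.End.mem_maxGenEigenspace f μ u).mp hu
      set N : Matrix W W ℂ := M - μ • 1 with hN
      have hNk : (N ^ k).mulVec u = 0 := by
        have h1 : Matrix.toLinAlgEquiv' (N ^ k) = (f - μ • 1) ^ k := by
          rw [map_pow, map_sub, _root_.map_smul, _root_.map_one]
        calc (N ^ k).mulVec u = (Matrix.toLinAlgEquiv' (N ^ k)) u := by
              rw [Matrix.toLinAlgEquiv'_apply]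
          _ = ((f - μ • 1) ^ k) u := by rw [h1]
          _ = 0 := hk
      -- expand exp(tM) u as a finite sum
      have key : ∀ t : ℝ, (exp (t • M)).mulVec u
          = ∑ j ∈ Finset.range k,
              (Complex.exp ((t : ℂ) * μ) * (t : ℂ) ^ j * ((Nat.factorial j : ℂ))⁻¹) •
                (N ^ j).mulVec u := by
        intro t
        have hsplit : t • M = ((t : ℂ) * μ) • (1 : Matrix W W ℂ) + t • N := by
          ext i j
          by_cases h : i = j <;>
            simp [hN, Matrix.sub_apply, Matrix.smul_apply, Matrix.one_apply, h,
              Complex.real_smul] <;> ring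
        have hcomm : Commute (((t : ℂ) * μ) • (1 : Matrix W W ℂ)) (t • N) :=
          (Commute.one_left (t • N)).smul_left ((t : ℂ) * μ)
        have hscal : exp (((t : ℂ) * μ) • (1 : Matrix W W ℂ))
            = Complex.exp ((t : ℂ) * μ) • (1 : Matrix W W ℂ) := by
          rw [← Algebra.algebraMap_eq_smul_one]
          erw [← map_exp (algebraMap ℂ (Matrix W W ℂ)) (continuous_algebraMap _ _)]
          rw [            show (exp ((t : ℂ) * μ)) = Complex.exp ((t : ℂ) * μ) by
              rw [← Complex.exp_eq_exp_ℂ],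
            Algebra.algebraMap_eq_smul_one]
        have hser : (exp (t • N)).mulVec u
            = ∑ j ∈ Finset.range k,
                ((t : ℂ) ^ j * ((Nat.factorial j : ℂ))⁻¹) • (N ^ j).mulVec u := by
          have hsum : Summable (fun n : ℕ => ((Nat.factorial n : ℝ))⁻¹ • (t • N) ^ n) :=
            expSeries_summable' (𝕂 := ℝ) (t • N)
          have h2 : (exp (t • N)).mulVec u
              = ∑' n : ℕ, mvCLM u (((Nat.factorial n : ℝ))⁻¹ • (t • N) ^ n) := by
            rw [exp_eq_tsum ℝ]
            exact ((mvCLM u).map_tsum hsum :)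
          rw [h2]
          have hterm : ∀ n : ℕ, mvCLM u (((Nat.factorial n : ℝ))⁻¹ • (t • N) ^ n)
              = ((t : ℂ) ^ n * ((Nat.factorial n : ℂ))⁻¹) • (N ^ n).mulVec u := by
            intro n
            rw [_root_.map_smul, smul_pow, _root_.map_smul, mvCLM_apply]
            funext w
            simp [Complex.real_smul]
            ring
          have hvanish : ∀ n ∉ Finset.range k,
              mvCLM u (((Nat.factorial n : ℝ))⁻¹ • (t • N) ^ n) = 0 := by
            intro n hn
            rw [hterm n]
            have hnk : k ≤ n := by simpa using hn
            have : (N ^ n).mulVec u = 0 := by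
              rw [show n = (n - k) + k by omega, pow_add, ← Matrix.mulVec_mulVec, hNk,
                Matrix.mulVec_zero]
            rw [this, smul_zero]
          rw [tsum_eq_sum hvanish]
          exact Finset.sum_congr rfl fun n _ => hterm n
        calc (exp (t • M)).mulVec u
            = (exp (((t : ℂ) * μ) • (1 : Matrix W W ℂ)) * exp (t • N)).mulVec u := by
              rw [← Matrix.exp_add_of_commute _ _ hcomm, ← hsplit]
          _ = (Complex.exp ((t : ℂ) * μ) • exp (t • N)).mulVec u := by
              rw [hscal, smul_mul_assoc, one_mul]
          _ = Complex.exp ((t : ℂ) * μ) • (exp (t • N)).mulVec u := by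
              rw [Matrix.smul_mulVec]
          _ = _ := by
              rw [hser, Finset.smul_sum]
              refine Finset.sum_congr rfl fun n _ => ?_
              rw [smul_smul]
              ring_nf
      have : Tendsto (fun t : ℝ => ∑ j ∈ Finset.range k,
          (Complex.exp ((t : ℂ) * μ) * (t : ℂ) ^ j * ((Nat.factorial j : ℂ))⁻¹) •
            (N ^ j).mulVec u) atTop (nhds 0) := by
        have : Tendsto (fun t : ℝ => ∑ j ∈ Finset.range k,
            (Complex.exp ((t : ℂ) * μ) * (t : ℂ) ^ j * ((Nat.factorial j : ℂ))⁻¹) •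
              (N ^ j).mulVec u) atTop
            (nhds (∑ j ∈ Finset.range k, (0 : W → ℂ))) := by
          refine tendsto_finset_sum _ fun j _ => ?_
          have h0 := (scalar_decay hre j ((Nat.factorial j : ℂ))⁻¹).smul_const
            ((N ^ j).mulVec u)
          simpa using h0
        simpa using this
      exact this.congr fun t => (key t).symm
  | zero => simpa [Matrix.mulVec_zero] using (tendsto_const_nhds :
      Tendsto (fun _ : ℝ => (0 : W → ℂ)) atTop (nhds 0))
  | add x y _ _ hx hy =>
    have := hx.add hy
    simpa [Matrix.mulVec_add] using this

section Real

/-- Complexification of a real solution. -/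
lemma complexify_sol (Mr : Matrix W W ℝ) (y : ℝ → W → ℝ)
    (hy : ∀ t, HasDerivAt y (Mr.mulVec (y t)) t) (t : ℝ) :
    HasDerivAt (fun s : ℝ => fun w => ((y s w : ℝ) : ℂ))
      ((Mr.map Complex.ofReal).mulVec (fun w => ((y t w : ℝ) : ℂ))) t := by
  rw [hasDerivAt_pi]
  intro w
  have h1 : HasDerivAt (fun s : ℝ => y s w) ((Mr.mulVec (y t)) w) t :=
    hasDerivAt_pi.mp (hy t) w
  have h2 := (Complex.ofRealCLM.hasFDerivAt.comp_hasDerivAt t h1 :)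
  refine h2.congr_deriv (Eq.symm ?_)
  simp [Matrix.mulVec, dotProduct, Matrix.map_apply]

/-- decay for real solutions, given the Hurwitz property of the complexification. -/
lemma real_decay (Mr : Matrix W W ℝ)
    (hM : ∀ μ ∈ spectrum ℂ (Mr.map Complex.ofReal), μ.re < 0)
    (y : ℝ → W → ℝ) (hy : ∀ t, HasDerivAt y (Mr.mulVec (y t)) t) :
    Tendsto y atTop (nhds 0) := by
  set z : ℝ → W → ℂ := fun s => fun w => ((y s w : ℝ) : ℂ) with hz
  have hzsol : ∀ t, HasDerivAt z ((Mr.map Complex.ofReal).mulVec (z t)) t :=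
    complexify_sol Mr y hy
  have hzeq : ∀ t, z t = (exp (t • Mr.map Complex.ofReal)).mulVec (z 0) :=
    sol_eq_expSol _ z hzsol
  have hz0 : Tendsto z atTop (nhds 0) := by
    have := expSol_tendsto_zero (Mr.map Complex.ofReal) hM (z 0)
    exact this.congr fun t => (hzeq t).symm
  rw [tendsto_pi_nhds]
  intro w
  have hw : Tendsto (fun t => z t w) atTop (nhds 0) := by
    have := (continuous_apply w).continuousAt.tendsto.comp hz0
    simpa [Function.comp_def] using this
  have := (Complex.continuous_re.continuousAt.tendsto.comp hw :)
  simpa [hz, Function.comp_def] using this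

/-- Existence of real solutions with arbitrary initial condition. -/
lemma real_exists (Mr : Matrix W W ℝ) (x0 : W → ℝ) :
    ∃ y : ℝ → W → ℝ, (∀ t, HasDerivAt y (Mr.mulVec (y t)) t) ∧ y 0 = x0 := by
  classical
  set Mc : Matrix W W ℂ := Mr.map Complex.ofReal with hMc
  set z : ℝ → W → ℂ := fun t => (exp (t • Mc)).mulVec (fun w => ((x0 w : ℝ) : ℂ)) with hzdef
  have hzsol : ∀ t, HasDerivAt z (Mc.mulVec (z t)) t := fun t =>
    hasDerivAt_expSol Mc _ t
  refine ⟨fun t => fun w => (z t w).re, fun t => ?_, ?_⟩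
  · rw [hasDerivAt_pi]
    intro w
    have h1 : HasDerivAt (fun s => z s w) ((Mc.mulVec (z t)) w) t :=
      hasDerivAt_pi.mp (hzsol t) w
    have h2 := (Complex.reCLM.hasFDerivAt.comp_hasDerivAt t h1 :)
    refine h2.congr_deriv (Eq.symm ?_)
    simp [hMc, Matrix.mulVec, dotProduct, Matrix.map_apply, Complex.re_sum,
      Complex.mul_re]
  · funext w
    have : z 0 = fun w => ((x0 w : ℝ) : ℂ) := by
      rw [hzdef]
      simp only [zero_smul, exp_zero, Matrix.one_mulVec]
    show (z 0 w).re = x0 w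
    rw [this]
    simp

/-- Uniqueness for real solutions. -/
lemma real_uniq (Mr : Matrix W W ℝ) (y1 y2 : ℝ → W → ℝ)
    (h1 : ∀ t, HasDerivAt y1 (Mr.mulVec (y1 t)) t)
    (h2 : ∀ t, HasDerivAt y2 (Mr.mulVec (y2 t)) t)
    (h0 : y1 0 = y2 0) : y1 = y2 := by
  funext t w
  have e1 := sol_eq_expSol (Mr.map Complex.ofReal) _ (complexify_sol Mr y1 h1) t
  have e2 := sol_eq_expSol (Mr.map Complex.ofReal) _ (complexify_sol Mr y2 h2) t
  rw [h0] at e1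
  have : ((y1 t w : ℝ) : ℂ) = ((y2 t w : ℝ) : ℂ) := by
    rw [show ((y1 t w : ℝ) : ℂ) = (fun w => ((y1 t w : ℝ) : ℂ)) w from rfl, e1,
      show ((y2 t w : ℝ) : ℂ) = (fun w => ((y2 t w : ℝ) : ℂ)) w from rfl, e2]
  exact_mod_cast this

/-- An eigenvector for a matrix from its spectrum. -/
lemma eigen_of_spectrum (Mc : Matrix W W ℂ) (μ : ℂ) (h : μ ∈ spectrum ℂ Mc) :
    ∃ v : W → ℂ, v ≠ 0 ∧ Mc.mulVec v = μ • v := by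
  rw [spectrum.mem_iff] at h
  have hdet : (algebraMap ℂ (Matrix W W ℂ) μ - Mc).det = 0 := by
    by_contra hd
    exact h ((Matrix.isUnit_iff_isUnit_det _).mpr (isUnit_iff_ne_zero.mpr hd))
  obtain ⟨v, hv0, hv⟩ := (Matrix.exists_mulVec_eq_zero_iff).mpr hdet
  refine ⟨v, hv0, ?_⟩
  have : (algebraMap ℂ (Matrix W W ℂ) μ).mulVec v - Mc.mulVec v = 0 := by
    rw [← Matrix.sub_mulVec, hv]
  have h2 : (algebraMap ℂ (Matrix W W ℂ) μ).mulVec v = μ • v := by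
    rw [Algebra.algebraMap_eq_smul_one, Matrix.smul_mulVec, Matrix.one_mulVec]
  rw [h2] at this
  exact (sub_eq_zero.mp this).symm

/-- Real solutions obtained from a complex eigenvector, via an ℝ-linear functional. -/
lemma eigen_sol (Mr : Matrix W W ℝ) {μ : ℂ} {v : W → ℂ}
    (hv : (Mr.map Complex.ofReal).mulVec v = μ • v)
    (φ : ℂ →L[ℝ] ℝ) (hφ : ∀ (r : ℝ) (z : ℂ), φ ((r : ℂ) * z) = r * φ z) (t : ℝ) :
    HasDerivAt (fun s : ℝ => fun w => φ (Complex.exp ((s : ℂ) * μ) * v w))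
      (Mr.mulVec (fun w => φ (Complex.exp ((t : ℂ) * μ) * v w))) t := by
  rw [hasDerivAt_pi]
  intro w
  have hexp : HasDerivAt (fun s : ℝ => Complex.exp ((s : ℂ) * μ))
      (Complex.exp ((t : ℂ) * μ) * μ) t := by
    have h0 : HasDerivAt (fun z : ℂ => Complex.exp (z * μ))
        (Complex.exp ((t : ℂ) * μ) * μ) ((t : ℝ) : ℂ) := by
      have := (Complex.hasDerivAt_exp ((t : ℂ) * μ)).comp ((t : ℝ) : ℂ)
        ((hasDerivAt_id ((t : ℝ) : ℂ)).mul_const μ)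
      simpa [Function.comp_def] using this
    exact h0.comp_ofReal
  have hmul : HasDerivAt (fun s : ℝ => Complex.exp ((s : ℂ) * μ) * v w)
      (Complex.exp ((t : ℂ) * μ) * μ * v w) t := hexp.mul_const (v w)
  have h2 := (φ.hasFDerivAt.comp_hasDerivAt t hmul :)
  refine h2.congr_deriv (Eq.symm ?_)
  -- identify the derivative
  have hsum : (Mr.mulVec (fun w' => φ (Complex.exp ((t : ℂ) * μ) * v w'))) w
      = φ ((Mr.map Complex.ofReal).mulVec (fun w' => Complex.exp ((t : ℂ) * μ) * v w') w) := by
    simp only [Matrix.mulVec, dotProduct, Matrix.map_apply]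
    rw [map_sum]
    refine Finset.sum_congr rfl fun k _ => ?_
    rw [← hφ]
  rw [hsum]
  have : (Mr.map Complex.ofReal).mulVec (fun w' => Complex.exp ((t : ℂ) * μ) * v w')
      = fun w' => Complex.exp ((t : ℂ) * μ) * (μ • v) w' := by
    rw [← hv]
    funext w'
    simp [Matrix.mulVec, dotProduct, Finset.mul_sum]
    refine Finset.sum_congr rfl fun k _ => ?_
    ring
  rw [this]
  simp only [Pi.smul_apply, smul_eq_mul]
  congr 1
  ring

/-- A nonzero mode with nonnegative real part cannot have both real and imaginary
parts tending to zero. -/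
lemma nondecay {μ : ℂ} (hμ : 0 ≤ μ.re) {c : ℂ} (hc : c ≠ 0)
    (hre : Tendsto (fun t : ℝ => (Complex.exp ((t : ℂ) * μ) * c).re) atTop (nhds 0))
    (him : Tendsto (fun t : ℝ => (Complex.exp ((t : ℂ) * μ) * c).im) atTop (nhds 0)) :
    False := by
  have hz : Tendsto (fun t : ℝ => Complex.exp ((t : ℂ) * μ) * c) atTop (nhds 0) := by
    have h1 : Tendsto (fun t : ℝ => (((Complex.exp ((t : ℂ) * μ) * c).re : ℝ) : ℂ)
        + (((Complex.exp ((t : ℂ) * μ) * c).im : ℝ) : ℂ) * Complex.I) atTop (nhds 0) := by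
      have ha := (Complex.continuous_ofReal.continuousAt.tendsto.comp hre :)
      have hb := (Complex.continuous_ofReal.continuousAt.tendsto.comp him :)
      have := ha.add (hb.mul_const Complex.I)
      simpa using this
    exact h1.congr fun t => Complex.re_add_im _
  have hnorm := hz.norm
  simp only [norm_zero] at hnorm
  have hev := (hnorm.eventually_lt_const (norm_pos_iff.mpr hc) :)
  have hev2 : ∀ᶠ t : ℝ in atTop, ‖c‖ ≤ ‖Complex.exp ((t : ℂ) * μ) * c‖ := by
    filter_upwards [eventually_ge_atTop (0 : ℝ)] with t ht
    simp only [norm_mul, Complex.norm_exp]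
    have : (1:ℝ) ≤ Real.exp (((t : ℂ) * μ).re) := by
      rw [Real.one_le_exp_iff]
      have : ((t : ℂ) * μ).re = t * μ.re := by simp
      rw [this]
      positivity
    nlinarith [norm_nonneg c]
  obtain ⟨t, h1, h2⟩ := (hev.and hev2).exists
  linarith

section Sys

variable {V : Type*} [Fintype V] [DecidableEq V] {n : ℕ}

/-- The system matrix `I ⊗ A - δ (L ⊗ C)` written entrywise. -/
def sysMat (A C : Matrix (Fin n) (Fin n) ℝ) (δ : ℝ) (L : Matrix V V ℝ) :
    Matrix (V × Fin n) (V × Fin n) ℝ :=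
  fun p q => (if p.1 = q.1 then A p.2 q.2 else 0) - δ * (L p.1 q.1 * C p.2 q.2)

open Kronecker in
lemma sysMat_eq_kron (A C : Matrix (Fin n) (Fin n) ℝ) (δ : ℝ) (L : Matrix V V ℝ) :
    sysMat A C δ L = (1 : Matrix V V ℝ) ⊗ₖ A - δ • (L ⊗ₖ C) := by
  ext ⟨p1, p2⟩ ⟨q1, q2⟩
  simp [sysMat, Matrix.kroneckerMap_apply, Matrix.one_apply, ite_mul, mul_assoc]

lemma sysMat_mulVec (A C : Matrix (Fin n) (Fin n) ℝ) (δ : ℝ) (L : Matrix V V ℝ)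
    (x : V → Fin n → ℝ) (v : V) (j : Fin n) :
    ((sysMat A C δ L).mulVec (fun p : V × Fin n => x p.1 p.2)) (v, j)
      = (A.mulVec (x v) - δ • C.mulVec (∑ k, L v k • x k)) j := by
  simp only [Matrix.mulVec, dotProduct, sysMat, Pi.sub_apply, Pi.smul_apply,
    smul_eq_mul, Fintype.sum_prod_type]
  simp only [sub_mul, ite_mul, zero_mul, Finset.sum_sub_distrib]
  congr 1
  · rw [Finset.sum_comm]
    simp [Finset.sum_ite_eq]
  · rw [Finset.sum_comm, Finset.mul_sum]
    refine Finset.sum_congr rfl fun m _ => ?_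
    simp only [Finset.sum_apply, Pi.smul_apply, smul_eq_mul]
    rw [Finset.mul_sum, Finset.mul_sum]
    refine Finset.sum_congr rfl fun k _ => ?_
    ring

/-- Equivalence between the componentwise ODE form and the vectorized matrix ODE. -/
lemma sys_iff (A C : Matrix (Fin n) (Fin n) ℝ) (δ : ℝ) (L : Matrix V V ℝ)
    (x : ℝ → V → Fin n → ℝ) :
    (∀ t (v : V), HasDerivAt (fun s => x s v)
        (A.mulVec (x t v) - δ • C.mulVec (∑ k, L v k • x t k)) t)
    ↔ (∀ t, HasDerivAt (fun s => fun p : V × Fin n => x s p.1 p.2)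
        ((sysMat A C δ L).mulVec (fun p : V × Fin n => x t p.1 p.2)) t) := by
  constructor
  · intro h t
    rw [hasDerivAt_pi]
    rintro ⟨v, j⟩
    have := hasDerivAt_pi.mp (h t v) j
    rw [sysMat_mulVec]
    exact this
  · intro h t v
    rw [hasDerivAt_pi]
    intro j
    have := hasDerivAt_pi.mp (h t) (v, j)
    rw [sysMat_mulVec] at this
    exact this

end Sys

/-- The key algebraic identity for error dynamics, using the common influence condition. -/
lemma err_sum {N n : ℕ} {l : Fin N → ℕ}
    (ℒ : Matrix ((i : Fin N) × Fin (l i + 1)) ((i : Fin N) × Fin (l i + 1)) ℝ)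
    (β : Fin N → Fin N → ℝ)
    (hblock : ∀ (i : Fin N) (a : Fin (l i + 1)) (j : Fin N),
      ∑ b : Fin (l j + 1), ℒ ⟨i, a⟩ ⟨j, b⟩ = β i j)
    (Lhat : Matrix ((i : Fin N) × Fin (l i)) ((i : Fin N) × Fin (l i)) ℝ)
    (hLhat : ∀ (i : Fin N) (a : Fin (l i)) (j : Fin N) (b : Fin (l j)),
      Lhat ⟨i, a⟩ ⟨j, b⟩ = ℒ ⟨i, a.succ⟩ ⟨j, b.succ⟩ - ℒ ⟨i, 0⟩ ⟨j, b.succ⟩)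
    (x : ((i : Fin N) × Fin (l i + 1)) → Fin n → ℝ) (i : Fin N) (a : Fin (l i)) :
    (∑ k : (i : Fin N) × Fin (l i + 1), (ℒ ⟨i, a.succ⟩ k - ℒ ⟨i, 0⟩ k) • x k)
      = ∑ q : (i : Fin N) × Fin (l i), Lhat ⟨i, a⟩ q • (x ⟨q.1, q.2.succ⟩ - x ⟨q.1, 0⟩) := by
  rw [← Finset.univ_sigma_univ, Finset.sum_sigma, ← Finset.univ_sigma_univ, Finset.sum_sigma]
  refine Finset.sum_congr rfl fun i' _ => ?_
  rw [Fin.sum_univ_succ]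
  have hc0 : ℒ ⟨i, a.succ⟩ ⟨i', 0⟩ - ℒ ⟨i, 0⟩ ⟨i', 0⟩
      = -∑ b : Fin (l i'), (ℒ ⟨i, a.succ⟩ ⟨i', b.succ⟩ - ℒ ⟨i, 0⟩ ⟨i', b.succ⟩) := by
    have e1 := hblock i a.succ i'
    have e2 := hblock i 0 i'
    rw [Fin.sum_univ_succ] at e1 e2
    rw [Finset.sum_sub_distrib]
    linarith
  rw [hc0, neg_smul, Finset.sum_smul]
  simp only [hLhat, smul_sub, Finset.sum_sub_distrib]
  abel

end Real

end Stmt7Aux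

/-- Under the inter-cluster common influence condition, the multi-agent
system `ẋ = (I ⊗ A − δ ℒ ⊗ BK) x` achieves group consensus for all initial states
(every solution satisfies `x_l − x_k → 0` for agents in the same cluster) if and only if
`I ⊗ A − δ L̂ ⊗ BK` is Hurwitz, where `L̂` is the reduced (cluster-error) matrix. -/
theorem stmt7 (N n nu : ℕ) (l : Fin N → ℕ)
    (ℒ : Matrix ((i : Fin N) × Fin (l i + 1)) ((i : Fin N) × Fin (l i + 1)) ℝ)
    (β : Fin N → Fin N → ℝ)
    (hoff : ∀ v k, v ≠ k → ℒ v k ≤ 0)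
    (hrow : ∀ v, ∑ k, ℒ v k = 0)
    (hblock : ∀ (i : Fin N) (a : Fin (l i + 1)) (j : Fin N),
      ∑ b : Fin (l j + 1), ℒ ⟨i, a⟩ ⟨j, b⟩ = β i j)
    (Lhat : Matrix ((i : Fin N) × Fin (l i)) ((i : Fin N) × Fin (l i)) ℝ)
    (hLhat : ∀ (i : Fin N) (a : Fin (l i)) (j : Fin N) (b : Fin (l j)),
      Lhat ⟨i, a⟩ ⟨j, b⟩ = ℒ ⟨i, a.succ⟩ ⟨j, b.succ⟩ - ℒ ⟨i, 0⟩ ⟨j, b.succ⟩)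
    (A : Matrix (Fin n) (Fin n) ℝ) (B : Matrix (Fin n) (Fin nu) ℝ)
    (K : Matrix (Fin nu) (Fin n) ℝ) (δ : ℝ) (hδ : 0 < δ) :
    (∀ x : ℝ → ((i : Fin N) × Fin (l i + 1)) → (Fin n → ℝ),
        (∀ t v, HasDerivAt (fun s => x s v)
            (A.mulVec (x t v) - δ • (B * K).mulVec (∑ k, ℒ v k • x t k)) t) →
        ∀ (i : Fin N) (a b : Fin (l i + 1)),
          Tendsto (fun t => x t ⟨i, a⟩ - x t ⟨i, b⟩) atTop (nhds 0)) ↔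
    (∀ μ ∈ spectrum ℂ
        (((1 : Matrix ((i : Fin N) × Fin (l i)) ((i : Fin N) × Fin (l i)) ℝ) ⊗ₖ A
            - δ • (Lhat ⊗ₖ (B * K))).map Complex.ofReal),
        μ.re < 0) := by
  classical
  rw [show ((1 : Matrix ((i : Fin N) × Fin (l i)) ((i : Fin N) × Fin (l i)) ℝ) ⊗ₖ A
      - δ • (Lhat ⊗ₖ (B * K))) = Stmt7Aux.sysMat A (B * K) δ Lhat from
    (Stmt7Aux.sysMat_eq_kron A (B * K) δ Lhat).symm]
  -- error dynamics
  have herr : ∀ (x : ℝ → ((i : Fin N) × Fin (l i + 1)) → Fin n → ℝ),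
      (∀ t v, HasDerivAt (fun s => x s v)
          (A.mulVec (x t v) - δ • (B * K).mulVec (∑ k, ℒ v k • x t k)) t) →
      ∀ (t : ℝ) (q : (i : Fin N) × Fin (l i)),
        HasDerivAt (fun s => x s ⟨q.1, q.2.succ⟩ - x s ⟨q.1, 0⟩)
          (A.mulVec (x t ⟨q.1, q.2.succ⟩ - x t ⟨q.1, 0⟩)
            - δ • (B * K).mulVec (∑ p : (i : Fin N) × Fin (l i),
                Lhat q p • (x t ⟨p.1, p.2.succ⟩ - x t ⟨p.1, 0⟩))) t := by
    intro x hx t q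
    have h1 := (hx t ⟨q.1, q.2.succ⟩).sub (hx t ⟨q.1, 0⟩)
    refine h1.congr_deriv (Eq.symm ?_)
    have hS : (∑ p : (i : Fin N) × Fin (l i), Lhat q p • (x t ⟨p.1, p.2.succ⟩ - x t ⟨p.1, 0⟩))
        = (∑ k, ℒ ⟨q.1, q.2.succ⟩ k • x t k) - (∑ k, ℒ ⟨q.1, 0⟩ k • x t k) := by
      have := Stmt7Aux.err_sum ℒ β hblock Lhat hLhat (x t) q.1 q.2
      rw [← this, ← Finset.sum_sub_distrib]
      refine Finset.sum_congr rfl fun k _ => ?_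
      rw [sub_smul]
    rw [hS, Matrix.mulVec_sub, Matrix.mulVec_sub, smul_sub]
    abel
  constructor
  · -- consensus ⇒ Hurwitz
    intro hcons μ hμ
    by_contra hre
    push_neg at hre
    obtain ⟨v, hv0, hv⟩ := Stmt7Aux.eigen_of_spectrum _ μ hμ
    obtain ⟨p0, hp0⟩ : ∃ p0, v p0 ≠ 0 := by
      by_contra h
      push_neg at h
      exact hv0 (funext h)
    have main : ∀ (φ : ℂ →L[ℝ] ℝ), (∀ (r : ℝ) (z : ℂ), φ ((r : ℂ) * z) = r * φ z) →
        Tendsto (fun t : ℝ => φ (Complex.exp ((t : ℂ) * μ) * v p0)) atTop (nhds 0) := by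
      intro φ hφ
      set Eφ : ℝ → ((((i : Fin N) × Fin (l i)) × Fin n)) → ℝ :=
        fun t p => φ (Complex.exp ((t : ℂ) * μ) * v p) with hEφdef
      have hEφ : ∀ t, HasDerivAt Eφ ((Stmt7Aux.sysMat A (B * K) δ Lhat).mulVec (Eφ t)) t :=
        fun t => Stmt7Aux.eigen_sol _ hv φ hφ t
      set x0 : ((((i : Fin N) × Fin (l i + 1)) × Fin n)) → ℝ :=
        fun p => Fin.cases (motive := fun _ => ℝ) 0
          (fun a' => Eφ 0 ⟨⟨p.1.1, a'⟩, p.2⟩) p.1.2 with hx0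
      obtain ⟨X, hXsol, hX0⟩ := Stmt7Aux.real_exists (Stmt7Aux.sysMat A (B * K) δ ℒ) x0
      set x : ℝ → ((i : Fin N) × Fin (l i + 1)) → Fin n → ℝ :=
        fun t vv j => X t (vv, j) with hxdef
      have hxsys : ∀ t v', HasDerivAt (fun s => x s v')
          (A.mulVec (x t v') - δ • (B * K).mulVec (∑ k, ℒ v' k • x t k)) t := by
        refine (Stmt7Aux.sys_iff A (B * K) δ ℒ x).mpr ?_
        intro t
        exact hXsol t
      have hcons' := hcons x hxsys
      have herr' := herr x hxsys
      have hErrSol := (Stmt7Aux.sys_iff A (B * K) δ Lhat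
        (fun t q => x t ⟨q.1, q.2.succ⟩ - x t ⟨q.1, 0⟩)).mp (fun t q => herr' t q)
      set Ex : ℝ → ((((i : Fin N) × Fin (l i)) × Fin n)) → ℝ :=
        fun t p => x t ⟨p.1.1, p.1.2.succ⟩ p.2 - x t ⟨p.1.1, 0⟩ p.2 with hExdef
      have h0 : Ex 0 = Eφ 0 := by
        funext p
        show x 0 ⟨p.1.1, p.1.2.succ⟩ p.2 - x 0 ⟨p.1.1, 0⟩ p.2 = Eφ 0 p
        have hA : x 0 ⟨p.1.1, p.1.2.succ⟩ p.2 = x0 (⟨p.1.1, p.1.2.succ⟩, p.2) := by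
          rw [hxdef]
          exact congrFun hX0 _
        have hB : x 0 ⟨p.1.1, 0⟩ p.2 = x0 (⟨p.1.1, (0 : Fin (l p.1.1 + 1))⟩, p.2) := by
          rw [hxdef]
          exact congrFun hX0 _
        rw [hA, hB, hx0]
        simp
      have huniq : Ex = Eφ := Stmt7Aux.real_uniq _ Ex Eφ (fun t => hErrSol t) hEφ h0
      have ht := hcons' p0.1.1 p0.1.2.succ 0
      rw [tendsto_pi_nhds] at ht
      have ht2 := ht p0.2
      have hEx0 : Tendsto (fun t => Ex t p0) atTop (nhds 0) := by
        simpa [hExdef] using ht2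
      rw [huniq] at hEx0
      simpa [hEφdef] using hEx0
    exact Stmt7Aux.nondecay hre hp0
      (main Complex.reCLM (fun r z => by simp [Complex.mul_re]))
      (main Complex.imCLM (fun r z => by simp [Complex.mul_im]))
  · -- Hurwitz ⇒ consensus
    intro hH x hx i a b
    have hE := (Stmt7Aux.sys_iff A (B * K) δ Lhat
      (fun t q => x t ⟨q.1, q.2.succ⟩ - x t ⟨q.1, 0⟩)).mp (fun t q => herr x hx t q)
    have hdec := Stmt7Aux.real_decay _ hH _ hE
    have key : ∀ c : Fin (l i + 1),
        Tendsto (fun t => x t ⟨i, c⟩ - x t ⟨i, 0⟩) atTop (nhds 0) := by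
      intro c
      induction c using Fin.cases with
      | zero => simpa [sub_self] using
          (tendsto_const_nhds : Tendsto (fun _ : ℝ => (0 : Fin n → ℝ)) atTop (nhds 0))
      | succ c' =>
        rw [tendsto_pi_nhds]
        intro j
        have := tendsto_pi_nhds.mp hdec (⟨⟨i, c'⟩, j⟩)
        simpa using this
    have := (key a).sub (key b)
    simpa [sub_sub_sub_cancel_right] using this
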